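/- The set G of trees with a good branch is recognized by an unambiguous nondeterministic parity automaton: the automaton A_G (which nondeterministically tracks a branch in states g₁, g₂, sends left-diverging subtrees to the deterministic complement-checking component A_L, right-diverging subtrees to all-accepting ⊤₂, and rejects via ⊥₁ upon reading b on the tracked branch) accepts exactly the trees in G, and has at most one accepting run on every tree, since an accepting run must label precisely the left-most good branch with g-states. -/
import Mathlib


/-- Infinite binary trees over {a,b}; `true` = a, `false` = b. -/
abbrev Tree2 := List (Fin 2) → Bool

/-- The length-`n` prefix of a branch. -/
def pre (β : ℕ → Fin 2) (n : ℕ) : List (Fin 2) := List.ofFn (fun i : Fin n => β i)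

/-- A branch is good: all its finite prefixes are labelled `a` and it turns left (0)
infinitely often. -/
def Good (t : Tree2) (β : ℕ → Fin 2) : Prop :=
  (∀ n, t (pre β n) = true) ∧ (∀ m, ∃ n ≥ m, β n = 0)

/-- `β` is strictly to the left of `γ`. -/
def LeftOf (β γ : ℕ → Fin 2) : Prop :=
  ∃ n, (∀ i < n, β i = γ i) ∧ β n = 0 ∧ γ n = 1

/-- A branch passes through a node. -/
def Through (γ : ℕ → Fin 2) (v : List (Fin 2)) : Prop := pre γ v.length = v

/-- The set of trees that have a good branch. -/
def G : Set Tree2 := {t | ∃ β, Good t β}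

/-- `r` occurs infinitely often in the sequence `g`. -/
def InfOften (g : ℕ → ℕ) (r : ℕ) : Prop := ∀ m, ∃ n ≥ m, g n = r

/-- Parity condition: the maximal value occurring infinitely often is even. -/
def ParityOk (g : ℕ → ℕ) : Prop :=
  ∃ r, Even r ∧ InfOften g r ∧ ∀ r', InfOften g r' → r' ≤ r

/-- States of the unambiguous automaton `A_G`. -/
inductive QG | g1 | g2 | top2 | bot1 | l1 | l0 | top0
deriving DecidableEq

def rankG : QG → ℕ
  | .g1 => 1 | .g2 => 2 | .top2 => 2 | .bot1 => 1
  | .l1 => 1 | .l0 => 0 | .top0 => 0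

/-- Transition relation of `A_G` (`true` = a, `false` = b). -/
def deltaG : QG → Bool → QG → QG → Prop := fun q a q1 q2 =>
  match q, a with
  | .g1, true | .g2, true => (q1 = .g2 ∧ q2 = .top2) ∨ (q1 = .l1 ∧ q2 = .g1)
  | .g1, false | .g2, false => q1 = .bot1 ∧ q2 = .bot1
  | .l1, true | .l0, true => q1 = .l1 ∧ q2 = .l0
  | .l1, false | .l0, false => q1 = .top0 ∧ q2 = .top0
  | .top2, _ => q1 = .top2 ∧ q2 = .top2
  | .bot1, _ => q1 = .bot1 ∧ q2 = .bot1
  | .top0, _ => q1 = .top0 ∧ q2 = .top0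

/-- A run of `A_G` on `t` starting in state `q0`. -/
def IsRunG (t : Tree2) (q0 : QG) (ρ : List (Fin 2) → QG) : Prop :=
  ρ [] = q0 ∧ ∀ v : List (Fin 2), deltaG (ρ v) (t v) (ρ (v ++ [0])) (ρ (v ++ [1]))

/-- An accepting run: the parity condition holds on every branch. -/
def AccRunG (t : Tree2) (q0 : QG) (ρ : List (Fin 2) → QG) : Prop :=
  IsRunG t q0 ρ ∧ ∀ β : ℕ → Fin 2, ParityOk (fun n => rankG (ρ (pre β n)))

-- Auxiliary development --

-- helpers
lemma pre_zero (β : ℕ → Fin 2) : pre β 0 = [] := rfl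
lemma pre_succ (β : ℕ → Fin 2) (n : ℕ) : pre β (n+1) = pre β n ++ [β n] := by
  unfold pre; rw [List.ofFn_succ']; simp
lemma length_pre (β : ℕ → Fin 2) (n : ℕ) : (pre β n).length = n := by
  simp [pre]
lemma pre_eq_of_agree {β γ : ℕ → Fin 2} {n : ℕ} (h : ∀ i < n, γ i = β i) :
    pre γ n = pre β n := by
  unfold pre; congr 1; funext i; exact h i i.isLt
lemma through_pre (γ : ℕ → Fin 2) (n : ℕ) : Through γ (pre γ n) := by
  unfold Through; rw [length_pre]
lemma through_snoc {γ : ℕ → Fin 2} {v : List (Fin 2)} (h : Through γ v) :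
    Through γ (v ++ [γ v.length]) := by
  unfold Through at *
  have : (v ++ [γ v.length]).length = v.length + 1 := by simp
  rw [this, pre_succ, h]
lemma good_through_t {t : Tree2} {γ : ℕ → Fin 2} {v : List (Fin 2)}
    (hg : Good t γ) (h : Through γ v) : t v = true := by
  have := hg.1 v.length; rwa [h] at this
lemma parityOk_of (g : ℕ → ℕ) (r N : ℕ) (hr : Even r) (hi : InfOften g r)
    (hb : ∀ n ≥ N, g n ≤ r) : ParityOk g := by
  refine ⟨r, hr, hi, fun r' h => ?_⟩
  obtain ⟨n, hn, he⟩ := h N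
  exact he ▸ hb n hn
lemma not_parityOk_of (g : ℕ → ℕ) (r N : ℕ) (hr : Odd r) (hi : InfOften g r)
    (hb : ∀ n ≥ N, g n ≤ r) : ¬ ParityOk g := by
  rintro ⟨r', he', hi', hmax⟩
  have h1 : r ≤ r' := hmax r hi
  obtain ⟨n, hn, hg⟩ := hi' N
  have h2 : r' ≤ r := hg ▸ hb n hn
  have : r = r' := le_antisymm h1 h2
  subst this
  rw [Nat.even_iff] at he'; rw [Nat.odd_iff] at hr; omega

lemma rankG_le_two (q : QG) : rankG q ≤ 2 := by cases q <;> simp [rankG]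

/-- deterministic child function; `d` is the branch-direction chosen at a g-state -/
def child (q : QG) (a : Bool) (c : Fin 2) (d : Fin 2) : QG :=
  match q, a with
  | .g1, true | .g2, true =>
      if d = 0 then (if c = 0 then .g2 else .top2) else (if c = 0 then .l1 else .g1)
  | .g1, false | .g2, false => .bot1
  | .l1, true | .l0, true => if c = 0 then .l1 else .l0
  | .l1, false | .l0, false => .top0
  | .top2, _ => .top2
  | .bot1, _ => .bot1
  | .top0, _ => .top0

lemma deltaG_child (q : QG) (a : Bool) (d : Fin 2) :
    deltaG q a (child q a 0 d) (child q a 1 d) := by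
  cases q <;> cases a <;> fin_cases d <;> simp [deltaG, child]

def go (t : Tree2) (β : ℕ → Fin 2) : QG → List (Fin 2) → List (Fin 2) → QG
  | q, _, [] => q
  | q, u, c :: w => go t β (child q (t u) c (β u.length)) (u ++ [c]) w

def runOf (t : Tree2) (β : ℕ → Fin 2) (v : List (Fin 2)) : QG := go t β .g1 [] v

lemma go_snoc (t : Tree2) (β : ℕ → Fin 2) :
    ∀ (w : List (Fin 2)) (q : QG) (u : List (Fin 2)) (c : Fin 2),
    go t β q u (w ++ [c]) = child (go t β q u w) (t (u ++ w)) c (β (u ++ w).length) := by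
  intro w
  induction w with
  | nil => intro q u c; simp [go]
  | cons a w ih =>
      intro q u c
      show go t β (child q (t u) a (β u.length)) (u ++ [a]) (w ++ [c]) = _
      rw [ih]
      simp [go]

lemma runOf_snoc (t : Tree2) (β : ℕ → Fin 2) (v : List (Fin 2)) (c : Fin 2) :
    runOf t β (v ++ [c]) = child (runOf t β v) (t v) c (β v.length) := by
  unfold runOf
  have := go_snoc t β v .g1 [] c
  simpa using this

lemma isRun_runOf (t : Tree2) (β : ℕ → Fin 2) : IsRunG t .g1 (runOf t β) := by
  refine ⟨rfl, fun v => ?_⟩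
  rw [runOf_snoc, runOf_snoc]
  exact deltaG_child _ _ _

/-- there is a good branch through `v` -/
def GT (t : Tree2) (v : List (Fin 2)) : Prop := ∃ γ, Good t γ ∧ Through γ v

open Classical in
noncomputable def lmL (t : Tree2) : ℕ → List (Fin 2)
  | 0 => []
  | n+1 => lmL t n ++ [if GT t (lmL t n ++ [0]) then (0 : Fin 2) else 1]

open Classical in
noncomputable def lm (t : Tree2) (n : ℕ) : Fin 2 :=
  if GT t (lmL t n ++ [0]) then 0 else 1

lemma pre_lm (t : Tree2) : ∀ n, pre (lm t) n = lmL t n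
  | 0 => rfl
  | n+1 => by rw [pre_succ, pre_lm t n]; rfl

lemma lm_invariant {t : Tree2} (ht : t ∈ G) : ∀ n, GT t (pre (lm t) n) := by
  intro n
  induction n with
  | zero => obtain ⟨γ, hγ⟩ := ht; exact ⟨γ, hγ, rfl⟩
  | succ n ih =>
      rw [pre_succ]
      by_cases h : GT t (pre (lm t) n ++ [0])
      · have : lm t n = 0 := by rw [lm, ← pre_lm, if_pos h]
        rwa [this]
      · have hl : lm t n = 1 := by rw [lm, ← pre_lm, if_neg h]
        rw [hl]
        obtain ⟨γ, hγg, hγt⟩ := ih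
        have h2 := through_snoc hγt
        rw [length_pre] at h2
        have : γ n = 1 := by
          by_contra hne
          have h0 : γ n = 0 := by omega
          rw [h0] at h2
          exact h ⟨γ, hγg, h2⟩
        rw [this] at h2
        exact ⟨γ, hγg, h2⟩

lemma lm_a {t : Tree2} (ht : t ∈ G) (n : ℕ) : t (pre (lm t) n) = true := by
  obtain ⟨γ, hγg, hγt⟩ := lm_invariant ht n
  exact good_through_t hγg hγt

lemma lm_leftmost {t : Tree2} (n : ℕ) (h : lm t n = 1) :
    ¬ GT t (pre (lm t) n ++ [0]) := by
  intro hgt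
  rw [lm, ← pre_lm, if_pos hgt] at h
  exact absurd h (by decide)

lemma lm_good {t : Tree2} (ht : t ∈ G) : Good t (lm t) := by
  refine ⟨lm_a ht, fun m => ?_⟩
  by_contra hno
  push_neg at hno
  have hone : ∀ n ≥ m, lm t n = 1 := by
    intro n hn; have := hno n hn; omega
  obtain ⟨γ, hγg, hγt⟩ := lm_invariant ht m
  have key : ∀ k, Through γ (pre (lm t) (m + k)) := by
    intro k
    induction k with
    | zero => simpa using hγt
    | succ k ih =>
        have h2 := through_snoc ih
        rw [length_pre] at h2
        have hg1 : γ (m + k) = 1 := by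
          by_contra hne
          have h0 : γ (m + k) = 0 := by omega
          rw [h0] at h2
          exact lm_leftmost (m+k) (hone _ (Nat.le_add_right _ _)) ⟨γ, hγg, h2⟩
        rw [hg1] at h2
        have : lm t (m + k) = 1 := hone _ (Nat.le_add_right _ _)
        rw [← this] at h2
        rw [← pre_succ] at h2
        exact h2
  -- γ is good so has a 0 beyond m; but key forces γ = lm beyond m, all 1
  obtain ⟨n, hn, h0⟩ := hγg.2 m
  have hthr := key (n + 1 - m)
  have heq : m + (n + 1 - m) = n + 1 := by omega
  rw [heq] at hthr
  -- Through γ (pre (lm t) (n+1)) means pre γ (n+1) = pre (lm t) (n+1)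
  unfold Through at hthr
  rw [length_pre] at hthr
  have : γ n = lm t n := by
    have h1 : pre γ (n+1) = pre (lm t) (n+1) := hthr
    rw [pre_succ, pre_succ] at h1
    have := List.append_inj_right h1 (by rw [length_pre, length_pre])
    simpa using this
  rw [h0, hone n hn] at this
  exact absurd this (by decide)

lemma runOf_pre_succ (t : Tree2) (β γ : ℕ → Fin 2) (n : ℕ) :
    runOf t β (pre γ (n+1)) = child (runOf t β (pre γ n)) (t (pre γ n)) (γ n) (β n) := by
  rw [pre_succ, runOf_snoc, length_pre]

lemma runOf_on_branch (t : Tree2) (β : ℕ → Fin 2) (hβa : ∀ n, t (pre β n) = true) :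
    ∀ n, (runOf t β (pre β n) = .g1 ∨ runOf t β (pre β n) = .g2) ∧
      (∀ m, n = m + 1 → runOf t β (pre β n) = if β m = 0 then .g2 else .g1) := by
  intro n
  induction n with
  | zero => exact ⟨Or.inl rfl, fun m hm => by omega⟩
  | succ n ih =>
      have hstep := runOf_pre_succ t β β n
      rw [hβa n] at hstep
      have hform : runOf t β (pre β (n+1)) = if β n = 0 then QG.g2 else QG.g1 := by
        rcases ih.1 with h | h <;> rw [h] at hstep <;>
          · rw [hstep]
            by_cases h0 : β n = 0
            · have h0' : β n = 0 := h0
              simp [child, h0]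
            · have h1 : β n = 1 := by omega
              simp [child, h1]
      refine ⟨?_, fun m hm => ?_⟩
      swap
      · have h : m = n := by omega
        subst h; exact hform
      rw [hform]
      by_cases h0 : β n = 0 <;> simp [h0]

lemma acc_runOf (t : Tree2) (β : ℕ → Fin 2) (hg : Good t β)
    (hlm : ∀ n, β n = 1 → ¬ GT t (pre β n ++ [0])) : AccRunG t .g1 (runOf t β) := by
  refine ⟨isRun_runOf t β, fun γ => ?_⟩
  by_cases hall : ∀ n, γ n = β n
  · -- γ = β : g-states forever, rank 2 infinitely often
    have hpre : ∀ n, pre γ n = pre β n := fun n => pre_eq_of_agree (fun i _ => hall i)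
    refine parityOk_of _ 2 0 (by decide) ?_ (fun n _ => rankG_le_two _)
    intro m
    obtain ⟨n, hn, h0⟩ := hg.2 m
    refine ⟨n+1, by omega, ?_⟩
    show rankG (runOf t β (pre γ (n+1))) = 2
    have := ((runOf_on_branch t β hg.1 (n+1)).2 n rfl)
    rw [hpre (n+1), this, if_pos h0]
    rfl
  · push_neg at hall
    have hex : ∃ n, γ n ≠ β n := hall
    classical
    let n₀ := Nat.find hex
    have hne : γ n₀ ≠ β n₀ := Nat.find_spec hex
    have hagree : ∀ i < n₀, γ i = β i := fun i hi => by
      have := Nat.find_min hex hi; simpa using this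
    have hpre0 : pre γ n₀ = pre β n₀ := pre_eq_of_agree hagree
    have hta : t (pre γ n₀) = true := by rw [hpre0]; exact hg.1 n₀
    have hstep := runOf_pre_succ t β γ n₀
    rw [hta] at hstep
    have hgst : runOf t β (pre γ n₀) = .g1 ∨ runOf t β (pre γ n₀) = .g2 := by
      rw [hpre0]; exact (runOf_on_branch t β hg.1 n₀).1
    by_cases hb0 : β n₀ = 0
    · -- diverged to the right: top2 forever
      have hγ1 : γ n₀ = 1 := by omega
      have htop : runOf t β (pre γ (n₀+1)) = .top2 := by
        rcases hgst with h | h <;> rw [h, hγ1, hb0] at hstep <;> simpa [child] using hstep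
      have hforever : ∀ m, m ≥ n₀ + 1 → runOf t β (pre γ m) = .top2 := by
        intro m hm
        induction m, hm using Nat.le_induction with
        | base => exact htop
        | succ m hm ih =>
            rw [runOf_pre_succ, ih]
            cases t (pre γ m) <;> rfl
      refine parityOk_of _ 2 0 (by decide) ?_ (fun n _ => rankG_le_two _)
      intro m
      refine ⟨max m (n₀+1), le_max_left _ _, ?_⟩
      show rankG (runOf t β (pre γ (max m (n₀+1)))) = 2
      rw [hforever _ (le_max_right _ _)]
      rfl
    · -- diverged to the left: l-component
      have hb1 : β n₀ = 1 := by omega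
      have hγ0 : γ n₀ = 0 := by omega
      have hl1 : runOf t β (pre γ (n₀+1)) = .l1 := by
        rcases hgst with h | h <;> rw [h, hγ0, hb1] at hstep <;> simpa [child] using hstep
      by_cases htop : ∃ m, m ≥ n₀ + 1 ∧ runOf t β (pre γ m) = .top0
      · obtain ⟨m, hm, htop0⟩ := htop
        have hforever : ∀ k, k ≥ m → runOf t β (pre γ k) = .top0 := by
          intro k hk
          induction k, hk using Nat.le_induction with
          | base => exact htop0
          | succ k hk ih =>
              rw [runOf_pre_succ, ih]
              cases t (pre γ k) <;> rfl
        refine parityOk_of _ 0 m (by decide) ?_ ?_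
        · intro m'
          refine ⟨max m' m, le_max_left _ _, ?_⟩
          show rankG (runOf t β (pre γ (max m' m))) = 0
          rw [hforever _ (le_max_right _ _)]; rfl
        · intro n hn; rw [hforever _ hn]; exact le_refl _
      · push_neg at htop
        have hl : ∀ m, m ≥ n₀ + 1 →
            runOf t β (pre γ m) = .l1 ∨ runOf t β (pre γ m) = .l0 := by
          intro m hm
          induction m, hm using Nat.le_induction with
          | base => exact Or.inl hl1
          | succ m hm ih =>
              have hs := runOf_pre_succ t β γ m
              cases hta' : t (pre γ m) with
              | false =>
                  exfalso
                  apply htop (m+1) (by omega)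
                  rw [hs, hta']
                  rcases ih with h | h <;> rw [h] <;> rfl
              | true =>
                  rw [hta'] at hs
                  rcases ih with h | h <;> rw [h] at hs <;>
                    · rw [hs]
                      by_cases h0 : γ m = 0
                      · simp [child, h0]
                      · have h1 : γ m = 1 := by omega
                        simp [child, h1]
        have htall : ∀ m, t (pre γ m) = true := by
          intro m
          rcases le_or_gt m n₀ with hm | hm
          · have : pre γ m = pre β m := pre_eq_of_agree (fun i hi => hagree i (by omega))
            rw [this]; exact hg.1 m
          · by_contra hf
            have hfb : t (pre γ m) = false := by simpa using hf
            apply htop (m+1) (by omega)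
            rw [runOf_pre_succ, hfb]
            rcases hl m (by omega) with h | h <;> rw [h] <;> rfl
        by_cases hinf : ∀ m, ∃ n ≥ m, γ n = 0
        · exfalso
          apply hlm n₀ hb1
          refine ⟨γ, ⟨htall, hinf⟩, ?_⟩
          have h2 := through_snoc (through_pre γ n₀)
          rw [length_pre, hγ0, hpre0] at h2
          exact h2
        · push_neg at hinf
          obtain ⟨M, hM⟩ := hinf
          have hend : ∀ n, n ≥ max M (n₀+1) + 1 → runOf t β (pre γ n) = .l0 := by
            intro n hn
            obtain ⟨m, rfl⟩ : ∃ m, n = m + 1 := ⟨n - 1, by omega⟩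
            have hm : m ≥ max M (n₀+1) := by omega
            have hγ1 : γ m = 1 := by
              have := hM m (le_trans (le_max_left _ _) hm); omega
            rw [runOf_pre_succ, htall m]
            rcases hl m (le_trans (le_max_right _ _) hm) with h | h <;>
              rw [h] <;> simp [child, hγ1]
          refine parityOk_of _ 0 (max M (n₀+1) + 1) (by decide) ?_ ?_
          · intro m'
            refine ⟨max m' (max M (n₀+1) + 1), le_max_left _ _, ?_⟩
            show rankG (runOf t β (pre γ (max m' (max M (n₀+1) + 1)))) = 0
            rw [hend _ (le_max_right _ _)]; rfl
          · intro n hn; rw [hend _ hn]; exact le_refl _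

lemma run_branch_step {t : Tree2} {q0 : QG} {ρ : List (Fin 2) → QG}
    (h : IsRunG t q0 ρ) (γ : ℕ → Fin 2) (n : ℕ) :
    deltaG (ρ (pre γ n)) (t (pre γ n)) (ρ (pre γ n ++ [0])) (ρ (pre γ n ++ [1])) :=
  h.2 _

lemma pre_succ_eq (γ : ℕ → Fin 2) (n : ℕ) (c : Fin 2) (h : γ n = c) :
    pre γ (n+1) = pre γ n ++ [c] := by rw [pre_succ, h]

/-- any branch through a `bot1` node rejects -/
lemma reject_bot {t : Tree2} {ρ : List (Fin 2) → QG}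
    (h : AccRunG t .g1 ρ) (v : List (Fin 2)) (hv : ρ v = .bot1) : False := by
  classical
  set γ : ℕ → Fin 2 := fun i => if h : i < v.length then v.get ⟨i, h⟩ else 0 with hγ
  have hpre : pre γ v.length = v := by
    unfold pre
    conv_rhs => rw [← List.ofFn_get v]
    congr 1; funext i; simp [hγ]
  have hbot : ∀ m, m ≥ v.length → ρ (pre γ m) = .bot1 := by
    intro m hm
    induction m, hm using Nat.le_induction with
    | base => rwa [hpre]
    | succ m hm ih =>
        have hd := run_branch_step h.1 γ m
        rw [ih] at hd
        have : ρ (pre γ m ++ [0]) = .bot1 ∧ ρ (pre γ m ++ [1]) = .bot1 := by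
          cases t (pre γ m) <;> exact hd
        rw [pre_succ]
        by_cases h0 : γ m = 0
        · rw [h0]; exact this.1
        · have h1 : γ m = 1 := by omega
          rw [h1]; exact this.2
  refine not_parityOk_of _ 1 v.length ⟨0, by omega⟩ ?_ ?_ (h.2 γ)
  · intro m
    refine ⟨max m v.length, le_max_left _ _, ?_⟩
    show rankG (ρ (pre γ (max m v.length))) = 1
    rw [hbot _ (le_max_right _ _)]; rfl
  · intro n hn
    show rankG (ρ (pre γ n)) ≤ 1
    rw [hbot _ hn]; exact le_refl _

lemma t_true_of_g {t : Tree2} {ρ : List (Fin 2) → QG}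
    (h : AccRunG t .g1 ρ) (v : List (Fin 2)) (hv : ρ v = .g1 ∨ ρ v = .g2) :
    t v = true := by
  by_contra hf
  have hfb : t v = false := by simpa using hf
  have hd := h.1.2 v
  rw [hfb] at hd
  have : ρ (v ++ [0]) = .bot1 := by
    rcases hv with h' | h' <;> rw [h'] at hd <;> exact hd.1
  exact reject_bot h _ this

/-- no good branch goes through an `l1`-labelled node -/
lemma reject_l {t : Tree2} {ρ : List (Fin 2) → QG}
    (h : AccRunG t .g1 ρ) (u : List (Fin 2)) (hu : ρ u = .l1) : ¬ GT t u := by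
  rintro ⟨γ, hγg, hγt⟩
  set n₀ := u.length with hn₀
  have hpre : pre γ n₀ = u := hγt
  -- all states along γ from n₀ on are l1/l0, with l1 exactly after a 0-step
  have hls : ∀ m, m ≥ n₀ → (ρ (pre γ m) = .l1 ∨ ρ (pre γ m) = .l0) ∧
      (∀ k, m = k + 1 → k ≥ n₀ → ρ (pre γ m) = if γ k = 0 then .l1 else .l0) := by
    intro m hm
    induction m, hm using Nat.le_induction with
    | base =>
        refine ⟨Or.inl (by rwa [hpre]), fun k hk hk' => by omega⟩
    | succ m hm ih =>
        have hd := run_branch_step h.1 γ m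
        rw [hγg.1 m] at hd
        have hch : ρ (pre γ m ++ [0]) = .l1 ∧ ρ (pre γ m ++ [1]) = .l0 := by
          rcases ih.1 with h' | h' <;> rw [h'] at hd <;> exact hd
        have hform : ρ (pre γ (m+1)) = if γ m = 0 then QG.l1 else QG.l0 := by
          by_cases h0 : γ m = 0
          · rw [if_pos h0, pre_succ_eq γ m 0 h0]; exact hch.1
          · have h1 : γ m = 1 := by omega
            rw [if_neg h0, pre_succ_eq γ m 1 h1]; exact hch.2
        refine ⟨?_, fun k hk hk' => ?_⟩
        · rw [hform]; by_cases h0 : γ m = 0 <;> simp [h0]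
        · have : k = m := by omega
          subst this; exact hform
  refine not_parityOk_of _ 1 n₀ ⟨0, by omega⟩ ?_ ?_ (h.2 γ)
  · intro m
    obtain ⟨k, hk, h0⟩ := hγg.2 (max m n₀)
    refine ⟨k + 1, by omega, ?_⟩
    show rankG (ρ (pre γ (k+1))) = 1
    have := (hls (k+1) (by omega)).2 k rfl (le_trans (le_max_right _ _) hk)
    rw [this, if_pos h0]; rfl
  · intro n hn
    show rankG (ρ (pre γ n)) ≤ 1
    rcases (hls n hn).1 with h' | h' <;> rw [h'] <;> simp [rankG]

/-- the branch traced by the g-states of a run -/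
def trL (ρ : List (Fin 2) → QG) : ℕ → List (Fin 2)
  | 0 => []
  | n+1 => trL ρ n ++ [if ρ (trL ρ n ++ [0]) = .g2 then (0 : Fin 2) else 1]

def tr (ρ : List (Fin 2) → QG) (n : ℕ) : Fin 2 :=
  if ρ (trL ρ n ++ [0]) = .g2 then 0 else 1

lemma pre_tr (ρ : List (Fin 2) → QG) : ∀ n, pre (tr ρ) n = trL ρ n
  | 0 => rfl
  | n+1 => by rw [pre_succ, pre_tr ρ n]; rfl

/-- key invariant + transition shape along the traced branch -/
lemma tr_invariant {t : Tree2} {ρ : List (Fin 2) → QG} (h : AccRunG t .g1 ρ) :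
    ∀ n, (ρ (pre (tr ρ) n) = .g1 ∨ ρ (pre (tr ρ) n) = .g2) ∧
      t (pre (tr ρ) n) = true ∧
      ((tr ρ n = 0 ∧ ρ (pre (tr ρ) n ++ [0]) = .g2 ∧ ρ (pre (tr ρ) n ++ [1]) = .top2) ∨
       (tr ρ n = 1 ∧ ρ (pre (tr ρ) n ++ [0]) = .l1 ∧ ρ (pre (tr ρ) n ++ [1]) = .g1)) := by
  have main : ∀ n, (ρ (pre (tr ρ) n) = .g1 ∨ ρ (pre (tr ρ) n) = .g2) := by
    intro n
    induction n with
    | zero => exact Or.inl h.1.1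
    | succ n ih =>
        have hta : t (pre (tr ρ) n) = true := t_true_of_g h _ ih
        have hd := run_branch_step h.1 (tr ρ) n
        rw [hta] at hd
        have hd' : (ρ (pre (tr ρ) n ++ [0]) = .g2 ∧ ρ (pre (tr ρ) n ++ [1]) = .top2) ∨
            (ρ (pre (tr ρ) n ++ [0]) = .l1 ∧ ρ (pre (tr ρ) n ++ [1]) = .g1) := by
          rcases ih with h' | h' <;> rw [h'] at hd <;> exact hd
        rcases hd' with ⟨h0, h1⟩ | ⟨h0, h1⟩
        · have htr : tr ρ n = 0 := by rw [tr, ← pre_tr, if_pos h0]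
          rw [pre_succ, htr]
          exact Or.inr h0
        · have htr : tr ρ n = 1 := by
            rw [tr, ← pre_tr, if_neg (by rw [h0]; decide)]
          rw [pre_succ, htr]
          exact Or.inl h1
  intro n
  have ih := main n
  have hta : t (pre (tr ρ) n) = true := t_true_of_g h _ ih
  have hd := run_branch_step h.1 (tr ρ) n
  rw [hta] at hd
  have hd' : (ρ (pre (tr ρ) n ++ [0]) = .g2 ∧ ρ (pre (tr ρ) n ++ [1]) = .top2) ∨
      (ρ (pre (tr ρ) n ++ [0]) = .l1 ∧ ρ (pre (tr ρ) n ++ [1]) = .g1) := by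
    rcases ih with h' | h' <;> rw [h'] at hd <;> exact hd
  refine ⟨ih, hta, ?_⟩
  rcases hd' with ⟨h0, h1⟩ | ⟨h0, h1⟩
  · exact Or.inl ⟨by rw [tr, ← pre_tr, if_pos h0], h0, h1⟩
  · exact Or.inr ⟨by rw [tr, ← pre_tr, if_neg (by rw [h0]; decide)], h0, h1⟩

lemma tr_good {t : Tree2} {ρ : List (Fin 2) → QG} (h : AccRunG t .g1 ρ) :
    Good t (tr ρ) := by
  refine ⟨fun n => (tr_invariant h n).2.1, ?_⟩
  intro m
  obtain ⟨r, hre, hri, hrm⟩ := h.2 (tr ρ)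
  -- all ranks on the traced branch are 1 or 2, so r = 2
  have hrank : ∀ n, rankG (ρ (pre (tr ρ) n)) = 1 ∨ rankG (ρ (pre (tr ρ) n)) = 2 := by
    intro n
    rcases (tr_invariant h n).1 with h' | h' <;> rw [h'] <;> simp [rankG]
  have hr2 : r = 2 := by
    obtain ⟨n, _, hn⟩ := hri 0
    have := hrank n
    have hn' : rankG (ρ (pre (tr ρ) n)) = r := hn
    rw [hn'] at this
    rcases hre with ⟨k, hk⟩
    omega
  subst hr2
  obtain ⟨n, hn, hrn⟩ := hri (m + 1)
  have hg2 : ρ (pre (tr ρ) n) = .g2 := by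
    rcases (tr_invariant h n).1 with h' | h'
    · have hrn' : rankG (ρ (pre (tr ρ) n)) = 2 := hrn
      rw [h'] at hrn'; simp [rankG] at hrn'
    · exact h'
  obtain ⟨k, rfl⟩ : ∃ k, n = k + 1 := ⟨n - 1, by omega⟩
  refine ⟨k, by omega, ?_⟩
  rcases (tr_invariant h k).2.2 with ⟨htr, _, _⟩ | ⟨htr, h0, h1⟩
  · exact htr
  · exfalso
    rw [pre_succ, htr, h1] at hg2
    exact absurd hg2 (by decide)

lemma tr_leftmost {t : Tree2} {ρ : List (Fin 2) → QG} (h : AccRunG t .g1 ρ)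
    (n : ℕ) (hn : tr ρ n = 1) : ¬ GT t (pre (tr ρ) n ++ [0]) := by
  rcases (tr_invariant h n).2.2 with ⟨htr, _, _⟩ | ⟨_, h0, _⟩
  · rw [htr] at hn; exact absurd hn (by decide)
  · exact reject_l h _ h0

lemma leftmost_unique {t : Tree2} {β₁ β₂ : ℕ → Fin 2}
    (h₁ : Good t β₁) (h₂ : Good t β₂)
    (l₁ : ∀ n, β₁ n = 1 → ¬ GT t (pre β₁ n ++ [0]))
    (l₂ : ∀ n, β₂ n = 1 → ¬ GT t (pre β₂ n ++ [0])) : β₁ = β₂ := by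
  have key : ∀ {βa βb : ℕ → Fin 2}, Good t βa →
      (∀ n, βb n = 1 → ¬ GT t (pre βb n ++ [0])) →
      ∀ n, (∀ i < n, βa i = βb i) → βa n = 0 → βb n = 1 → False := by
    intro βa βb hga lb n hag ha hb
    apply lb n hb
    have h2 := through_snoc (through_pre βa n)
    rw [length_pre, ha] at h2
    rw [← pre_eq_of_agree hag]
    exact ⟨βa, hga, h2⟩
  funext n
  induction n using Nat.strong_induction_on with
  | _ n ih =>
      by_contra hne
      have hag : ∀ i < n, β₁ i = β₂ i := fun i hi => ih i hi
      by_cases h10 : β₁ n = 0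
      · have h21 : β₂ n = 1 := by omega
        exact key h₁ l₂ n hag h10 h21
      · have h11 : β₁ n = 1 := by omega
        have h20 : β₂ n = 0 := by omega
        exact key h₂ l₁ n (fun i hi => (hag i hi).symm) h20 h11


/-- `A_G` recognizes `G` and is unambiguous: it accepts exactly the trees with a good
branch, and has at most one accepting run on every tree. -/
theorem AG_recognizes_G_unambiguously :
    (∀ t : Tree2, (∃ ρ, AccRunG t QG.g1 ρ) ↔ t ∈ G) ∧
    (∀ (t : Tree2) ρ₁ ρ₂, AccRunG t QG.g1 ρ₁ → AccRunG t QG.g1 ρ₂ → ρ₁ = ρ₂) := by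

  constructor
  · intro t
    constructor
    · rintro ⟨ρ, hρ⟩
      exact ⟨tr ρ, tr_good hρ⟩
    · intro ht
      exact ⟨runOf t (lm t), acc_runOf t (lm t) (lm_good ht) (fun n => lm_leftmost n)⟩
  · intro t ρ₁ ρ₂ h₁ h₂
    have hβ : tr ρ₁ = tr ρ₂ :=
      leftmost_unique (tr_good h₁) (tr_good h₂) (tr_leftmost h₁) (tr_leftmost h₂)
    have claim : ∀ v : List (Fin 2), ρ₁ v = ρ₂ v ∧
        ((ρ₁ v = .g1 ∨ ρ₁ v = .g2) → v = pre (tr ρ₁) v.length) := by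
      have step : ∀ (v : List (Fin 2)), (ρ₁ v = ρ₂ v ∧
          ((ρ₁ v = .g1 ∨ ρ₁ v = .g2) → v = pre (tr ρ₁) v.length)) → ∀ c : Fin 2,
          ρ₁ (v ++ [c]) = ρ₂ (v ++ [c]) ∧
          ((ρ₁ (v ++ [c]) = .g1 ∨ ρ₁ (v ++ [c]) = .g2) → v ++ [c] = pre (tr ρ₁) (v ++ [c]).length) := by
        rintro v ⟨heq, hgp⟩ c
        have hlen : (v ++ [c]).length = v.length + 1 := by simp
        have d₁ := h₁.1.2 v
        have d₂ := h₂.1.2 v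
        rw [← heq] at d₂
        cases hq : ρ₁ v with
        | top2 =>
            rw [hq] at d₁ d₂
            have e₁ : ρ₁ (v ++ [0]) = .top2 ∧ ρ₁ (v ++ [1]) = .top2 := by
              cases t v <;> exact d₁
            have e₂ : ρ₂ (v ++ [0]) = .top2 ∧ ρ₂ (v ++ [1]) = .top2 := by
              cases t v <;> exact d₂
            rcases (show c = 0 ∨ c = 1 by omega) with rfl | rfl
            · exact ⟨e₁.1.trans e₂.1.symm, fun hc => by rw [e₁.1] at hc; rcases hc with hc|hc <;> exact absurd hc (by decide)⟩
            · exact ⟨e₁.2.trans e₂.2.symm, fun hc => by rw [e₁.2] at hc; rcases hc with hc|hc <;> exact absurd hc (by decide)⟩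
        | bot1 =>
            rw [hq] at d₁ d₂
            have e₁ : ρ₁ (v ++ [0]) = .bot1 ∧ ρ₁ (v ++ [1]) = .bot1 := by
              cases t v <;> exact d₁
            have e₂ : ρ₂ (v ++ [0]) = .bot1 ∧ ρ₂ (v ++ [1]) = .bot1 := by
              cases t v <;> exact d₂
            rcases (show c = 0 ∨ c = 1 by omega) with rfl | rfl
            · exact ⟨e₁.1.trans e₂.1.symm, fun hc => by rw [e₁.1] at hc; rcases hc with hc|hc <;> exact absurd hc (by decide)⟩
            · exact ⟨e₁.2.trans e₂.2.symm, fun hc => by rw [e₁.2] at hc; rcases hc with hc|hc <;> exact absurd hc (by decide)⟩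
        | top0 =>
            rw [hq] at d₁ d₂
            have e₁ : ρ₁ (v ++ [0]) = .top0 ∧ ρ₁ (v ++ [1]) = .top0 := by
              cases t v <;> exact d₁
            have e₂ : ρ₂ (v ++ [0]) = .top0 ∧ ρ₂ (v ++ [1]) = .top0 := by
              cases t v <;> exact d₂
            rcases (show c = 0 ∨ c = 1 by omega) with rfl | rfl
            · exact ⟨e₁.1.trans e₂.1.symm, fun hc => by rw [e₁.1] at hc; rcases hc with hc|hc <;> exact absurd hc (by decide)⟩
            · exact ⟨e₁.2.trans e₂.2.symm, fun hc => by rw [e₁.2] at hc; rcases hc with hc|hc <;> exact absurd hc (by decide)⟩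
        | l1 =>
            rw [hq] at d₁ d₂
            cases ht : t v <;> rw [ht] at d₁ d₂
            · rcases (show c = 0 ∨ c = 1 by omega) with rfl | rfl
              · exact ⟨d₁.1.trans d₂.1.symm, fun hc => by rw [d₁.1] at hc; rcases hc with hc|hc <;> exact absurd hc (by decide)⟩
              · exact ⟨d₁.2.trans d₂.2.symm, fun hc => by rw [d₁.2] at hc; rcases hc with hc|hc <;> exact absurd hc (by decide)⟩
            · rcases (show c = 0 ∨ c = 1 by omega) with rfl | rfl
              · exact ⟨d₁.1.trans d₂.1.symm, fun hc => by rw [d₁.1] at hc; rcases hc with hc|hc <;> exact absurd hc (by decide)⟩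
              · exact ⟨d₁.2.trans d₂.2.symm, fun hc => by rw [d₁.2] at hc; rcases hc with hc|hc <;> exact absurd hc (by decide)⟩
        | l0 =>
            rw [hq] at d₁ d₂
            cases ht : t v <;> rw [ht] at d₁ d₂
            · rcases (show c = 0 ∨ c = 1 by omega) with rfl | rfl
              · exact ⟨d₁.1.trans d₂.1.symm, fun hc => by rw [d₁.1] at hc; rcases hc with hc|hc <;> exact absurd hc (by decide)⟩
              · exact ⟨d₁.2.trans d₂.2.symm, fun hc => by rw [d₁.2] at hc; rcases hc with hc|hc <;> exact absurd hc (by decide)⟩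
            · rcases (show c = 0 ∨ c = 1 by omega) with rfl | rfl
              · exact ⟨d₁.1.trans d₂.1.symm, fun hc => by rw [d₁.1] at hc; rcases hc with hc|hc <;> exact absurd hc (by decide)⟩
              · exact ⟨d₁.2.trans d₂.2.symm, fun hc => by rw [d₁.2] at hc; rcases hc with hc|hc <;> exact absurd hc (by decide)⟩
        | g1 =>
            have hv : v = pre (tr ρ₁) v.length := hgp (Or.inl hq)
            set n := v.length with hn
            have i₁ := (tr_invariant h₁ n).2.2
            have i₂ := (tr_invariant h₂ n).2.2
            rw [← hβ] at i₂
            rw [← hv] at i₁ i₂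
            rcases i₁ with ⟨htr1, ha1, hb1⟩ | ⟨htr1, ha1, hb1⟩ <;>
              rcases i₂ with ⟨htr2, ha2, hb2⟩ | ⟨htr2, ha2, hb2⟩
            · rcases (show c = 0 ∨ c = 1 by omega) with rfl | rfl
              · refine ⟨ha1.trans ha2.symm, fun _ => ?_⟩
                rw [hlen, pre_succ, htr1, ← hv]
              · exact ⟨hb1.trans hb2.symm, fun hc => by rw [hb1] at hc; rcases hc with hc|hc <;> exact absurd hc (by decide)⟩
            · exact absurd (htr1.symm.trans htr2) (by decide)
            · exact absurd (htr1.symm.trans htr2) (by decide)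
            · rcases (show c = 0 ∨ c = 1 by omega) with rfl | rfl
              · exact ⟨ha1.trans ha2.symm, fun hc => by rw [ha1] at hc; rcases hc with hc|hc <;> exact absurd hc (by decide)⟩
              · refine ⟨hb1.trans hb2.symm, fun _ => ?_⟩
                rw [hlen, pre_succ, htr1, ← hv]
        | g2 =>
            have hv : v = pre (tr ρ₁) v.length := hgp (Or.inr hq)
            set n := v.length with hn
            have i₁ := (tr_invariant h₁ n).2.2
            have i₂ := (tr_invariant h₂ n).2.2
            rw [← hβ] at i₂
            rw [← hv] at i₁ i₂
            rcases i₁ with ⟨htr1, ha1, hb1⟩ | ⟨htr1, ha1, hb1⟩ <;>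
              rcases i₂ with ⟨htr2, ha2, hb2⟩ | ⟨htr2, ha2, hb2⟩
            · rcases (show c = 0 ∨ c = 1 by omega) with rfl | rfl
              · refine ⟨ha1.trans ha2.symm, fun _ => ?_⟩
                rw [hlen, pre_succ, htr1, ← hv]
              · exact ⟨hb1.trans hb2.symm, fun hc => by rw [hb1] at hc; rcases hc with hc|hc <;> exact absurd hc (by decide)⟩
            · exact absurd (htr1.symm.trans htr2) (by decide)
            · exact absurd (htr1.symm.trans htr2) (by decide)
            · rcases (show c = 0 ∨ c = 1 by omega) with rfl | rfl
              · exact ⟨ha1.trans ha2.symm, fun hc => by rw [ha1] at hc; rcases hc with hc|hc <;> exact absurd hc (by decide)⟩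
              · refine ⟨hb1.trans hb2.symm, fun _ => ?_⟩
                rw [hlen, pre_succ, htr1, ← hv]
      intro v
      induction v using List.reverseRecOn with
      | nil =>
          refine ⟨h₁.1.1.trans h₂.1.1.symm, fun _ => ?_⟩
          simp [pre]
      | append_singleton v c ih => exact step v ih c
    funext v
    exact (claim v).1
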